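/- Let →₂ be a well-founded relation on A and →₁ ⊆ →₂ with →₂ ⊆ (→₁ ∘ →₂* ∘ ↔₁* ∘ ←₂*). Then →₂* ⊆ ↔₁*. -/

import Mathlib

def star {A : Type*} (r : A → A → Prop) : A → A → Prop := Relation.ReflTransGen r

def conv {A : Type*} (r : A → A → Prop) : A → A → Prop :=
  Relation.ReflTransGen (fun a b => r a b ∨ r b a)

lemma conv_symm {A : Type*} {r : A → A → Prop} {a b : A} (h : conv r a b) : conv r b a :=
  (@Relation.ReflTransGen.symmetric _ _ ⟨fun _ _ h => h.symm⟩).symm _ _ h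

lemma conv_trans {A : Type*} {r : A → A → Prop} {a b c : A}
    (h : conv r a b) (h' : conv r b c) : conv r a c := Relation.ReflTransGen.trans h h'

theorem stmt_4 {A : Type*} (r1 r2 : A → A → Prop)
    (h2 : WellFounded (fun a b => r2 b a))
    (h1 : ∀ a b, r1 a b → r2 a b)
    (h3 : ∀ a b, r2 a b →
      ∃ x y z, r1 a x ∧ star r2 x y ∧ conv r1 y z ∧ star r2 b z) :
    ∀ a b, star r2 a b → conv r1 a b := by
  intro a
  induction a using h2.induction with
  | _ a ih =>
    intro b hab
    rcases Relation.ReflTransGen.cases_head hab with rfl | ⟨c, hac, hcb⟩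
    · exact Relation.ReflTransGen.refl
    · obtain ⟨x, y, z, hax, hxy, hyz, hcz⟩ := h3 a c hac
      have hxstep : conv r1 a x := Relation.ReflTransGen.single (Or.inl hax)
      have hx : conv r1 x y := ih x (h1 a x hax) y hxy
      have hc1 : conv r1 c z := ih c hac z hcz
      have hc2 : conv r1 c b := ih c hac b hcb
      exact conv_trans hxstep (conv_trans hx (conv_trans hyz
        (conv_trans (conv_symm hc1) hc2)))
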